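/- For n≥1 and k≥2, the diameter of the k-Pell graph Π(n,k) equals nk - ⌈n/2⌉. -/

import Mathlib

def isPellStr (k : ℕ) : List ℕ → Bool
  | [] => true
  | [a] => decide (a < k)
  | a :: b :: rest =>
    if a = k then (b == k) && isPellStr k rest
    else decide (a < k) && isPellStr k (b :: rest)

abbrev PellVert (n k : ℕ) := {f : Fin n → Fin (k + 1) // isPellStr k (List.ofFn fun i => (f i : ℕ)) = true}

def pellAdj (k : ℕ) {n : ℕ} (f g : Fin n → Fin (k + 1)) : Prop :=
  (∃ j : Fin n, ((g j : ℕ) = (f j : ℕ) + 1) ∧ ((f j : ℕ) + 1 < k) ∧ ∀ i, i ≠ j → f i = g i) ∨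
  (∃ j j' : Fin n, ((j' : ℕ) = (j : ℕ) + 1) ∧ ((f j : ℕ) = k - 1) ∧ ((f j' : ℕ) = k - 1) ∧
    ((g j : ℕ) = k) ∧ ((g j' : ℕ) = k) ∧ ∀ i, i ≠ j → i ≠ j' → f i = g i)

def kPellGraph (n k : ℕ) : SimpleGraph (PellVert n k) :=
  SimpleGraph.fromRel (fun u v => pellAdj k u.1 v.1)

noncomputable def pellEcc {n k : ℕ} (v : PellVert n k) : ℕ :=
  Finset.univ.sup fun u => (kPellGraph n k).dist v u

noncomputable def pellRadius (n k : ℕ) : ℕ := sInf (Set.range (pellEcc (n := n) (k := k)))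

noncomputable def pellDiam (n k : ℕ) : ℕ := Finset.univ.sup (pellEcc (n := n) (k := k))

def pellCenter (n k : ℕ) : Set (PellVert n k) := {v | pellEcc v = pellRadius n k}

/-! ### Auxiliary definitions -/

/-- weight of a letter -/
def pwt (k x : ℕ) : ℕ := if x = k then 2 * k - 1 else 2 * x

/-- rank function -/
def pPhi (k : ℕ) {n : ℕ} (f : Fin n → Fin (k + 1)) : ℕ := ∑ i, pwt k (f i)

lemma pellAdj_phi {n k : ℕ} (hk : 1 ≤ k) {f g : Fin n → Fin (k + 1)}
    (h : pellAdj k f g) : pPhi k g = pPhi k f + 2 := by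
  rcases h with ⟨j, hgj, hlt, heq⟩ | ⟨j, j', hj', hfj, hfj', hgj, hgj', heq⟩
  · rw [pPhi, pPhi, ← Finset.add_sum_erase _ _ (Finset.mem_univ j),
      ← Finset.add_sum_erase _ _ (Finset.mem_univ j)]
    have hsum : ∑ i ∈ Finset.univ.erase j, pwt k (g i)
        = ∑ i ∈ Finset.univ.erase j, pwt k (f i) := by
      refine Finset.sum_congr rfl fun i hi => ?_
      rw [heq i (Finset.mem_erase.1 hi).1]
    rw [hsum]
    have h1 : pwt k (g j) = 2 * (f j : ℕ) + 2 := by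
      rw [pwt, if_neg (by omega), hgj]; ring
    have h2 : pwt k (f j) = 2 * (f j : ℕ) := by
      rw [pwt, if_neg (by omega)]
    omega
  · have hne : j ≠ j' := by
      intro h; rw [h] at hj'; omega
    have hj'mem : j' ∈ Finset.univ.erase j := Finset.mem_erase.2 ⟨Ne.symm hne, Finset.mem_univ _⟩
    rw [pPhi, pPhi, ← Finset.add_sum_erase _ _ (Finset.mem_univ j),
      ← Finset.add_sum_erase _ _ (Finset.mem_univ j),
      ← Finset.add_sum_erase _ _ hj'mem, ← Finset.add_sum_erase _ _ hj'mem]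
    have hsum : ∑ i ∈ (Finset.univ.erase j).erase j', pwt k (g i)
        = ∑ i ∈ (Finset.univ.erase j).erase j', pwt k (f i) := by
      refine Finset.sum_congr rfl fun i hi => ?_
      have hi' := Finset.mem_erase.1 hi
      have hi'' := Finset.mem_erase.1 hi'.2
      rw [heq i hi''.1 hi'.1]
    rw [hsum]
    have e1 : pwt k (g j) = 2 * k - 1 := by rw [pwt, if_pos hgj]
    have e2 : pwt k (g j') = 2 * k - 1 := by rw [pwt, if_pos hgj']
    have e3 : pwt k (f j) = 2 * k - 2 := by rw [pwt, if_neg (by omega), hfj]; omega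
    have e4 : pwt k (f j') = 2 * k - 2 := by rw [pwt, if_neg (by omega), hfj']; omega
    omega

lemma walk_phi {n k : ℕ} (hk : 1 ≤ k) {x y : PellVert n k}
    (p : (kPellGraph n k).Walk x y) : pPhi k y.1 ≤ pPhi k x.1 + 2 * p.length := by
  induction p with
  | nil => simp
  | cons h p ih =>
    rw [kPellGraph, SimpleGraph.fromRel_adj] at h
    rcases h.2 with h' | h'
    · have := pellAdj_phi hk h'
      rw [SimpleGraph.Walk.length_cons]
      omega
    · have := pellAdj_phi hk h'
      rw [SimpleGraph.Walk.length_cons]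
      omega

/-! ### List lemmas about `isPellStr` -/

lemma pell_of_all_lt {k : ℕ} : ∀ l : List ℕ, (∀ x ∈ l, x < k) → isPellStr k l = true := by
  intro l
  induction l with
  | nil => intro _; rfl
  | cons a t ih =>
    intro h
    have ha : a < k := h a (by simp)
    match t with
    | [] => simp [isPellStr, ha]
    | b :: r =>
      have : isPellStr k (b :: r) = true := ih (fun x hx => h x (by simp [hx]))
      simp [isPellStr, ha, if_neg (by omega : ¬ a = k), this]

lemma pell_cons {k a : ℕ} (ha : a < k) (t : List ℕ) (ht : isPellStr k t = true) :
    isPellStr k (a :: t) = true := by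
  match t with
  | [] => simp [isPellStr, ha]
  | b :: r =>
    rw [isPellStr, if_neg (by omega)]
    simp [ha, ht]

lemma pell_first_pair {k : ℕ} : ∀ (l : List ℕ) (i : ℕ), isPellStr k l = true →
    (∀ j, j < i → l[j]? ≠ some k) → l[i]? = some k → l[i + 1]? = some k := by
  intro l
  induction l with
  | nil => intro i _ _ hi; simp at hi
  | cons a t ih =>
    intro i hp hprior hi
    match i with
    | 0 =>
      simp at hi
      match t with
      | [] => rw [hi, isPellStr] at hp; simp at hp
      | b :: r =>
        rw [isPellStr, if_pos hi, Bool.and_eq_true] at hp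
        have hb : b = k := beq_iff_eq.1 hp.1
        simp [hb]
    | i + 1 =>
      have ha : a ≠ k := by
        have := hprior 0 (by omega)
        simpa using this
      match t with
      | [] => simp at hi
      | b :: r =>
        rw [isPellStr, if_neg ha, Bool.and_eq_true] at hp
        have hp' : isPellStr k (b :: r) = true := hp.2
        have := ih i hp' (fun j hj => by
          have := hprior (j + 1) (by omega)
          simpa using this) (by simpa using hi)
        simpa using this

lemma pell_set_pair {k : ℕ} (hk : 1 ≤ k) : ∀ (l : List ℕ) (i : ℕ), isPellStr k l = true →
    (∀ j, j < i → l[j]? ≠ some k) → l[i]? = some k → l[i + 1]? = some k →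
    isPellStr k ((l.set i (k - 1)).set (i + 1) (k - 1)) = true := by
  intro l
  induction l with
  | nil => intro i _ _ hi; simp at hi
  | cons a t ih =>
    intro i hp hprior hi hi1
    match i with
    | 0 =>
      simp at hi
      match t with
      | [] => simp at hi1
      | b :: r =>
        rw [isPellStr, if_pos hi, Bool.and_eq_true] at hp
        have hr : isPellStr k r = true := hp.2
        show isPellStr k ((k-1) :: (k-1) :: r) = true
        exact pell_cons (by omega) _ (pell_cons (by omega) _ hr)
    | i + 1 =>
      have ha : a ≠ k := by
        have := hprior 0 (by omega)
        simpa using this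
      match t with
      | [] => simp at hi
      | b :: r =>
        rw [isPellStr, if_neg ha, Bool.and_eq_true] at hp
        have hak : a < k := by simpa using hp.1
        have hrec := ih i hp.2 (fun j hj => by
          have := hprior (j + 1) (by omega)
          simpa using this) (by simpa using hi) (by simpa using hi1)
        show isPellStr k (a :: ((b :: r).set i (k-1)).set (i+1) (k-1)) = true
        exact pell_cons hak _ hrec

lemma pell_rep {k : ℕ} (l : List ℕ) (h : isPellStr k l = true) :
    ∀ m, isPellStr k (List.replicate (2 * m) k ++ l) = true := by
  intro m
  induction m with
  | zero => simpa using h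
  | succ m ih =>
    have : 2 * (m + 1) = (2 * m) + 1 + 1 := by omega
    rw [this, List.replicate_succ, List.replicate_succ]
    show isPellStr k (k :: k :: (List.replicate (2*m) k ++ l)) = true
    rw [isPellStr, if_pos rfl]
    simp [ih]

/-! ### bridging lemmas -/

lemma ofFn_update {n k : ℕ} (f : Fin n → Fin (k + 1)) (j : Fin n) (a : Fin (k + 1)) :
    (List.ofFn fun i => ((Function.update f j a) i : ℕ))
      = (List.ofFn fun i => (f i : ℕ)).set (j : ℕ) (a : ℕ) := by
  apply List.ext_getElem
  · simp
  · intro i h1 h2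
    have h1' : i < n := by simpa using h1
    rw [List.getElem_ofFn, List.getElem_set, List.getElem_ofFn]
    rw [Function.update_apply]
    by_cases hij : (⟨i, by simpa using h1⟩ : Fin n) = j
    · rw [if_pos hij]
      have hji : (j : ℕ) = i := by rw [← hij]
      rw [if_pos hji]
    · rw [if_neg hij, if_neg (fun hc => hij (Fin.ext hc.symm))]

lemma phi_list {n k : ℕ} (f : Fin n → Fin (k + 1)) :
    pPhi k f = ((List.ofFn fun i => (f i : ℕ)).map (pwt k)).sum := by
  rw [List.map_ofFn, List.sum_ofFn]
  rfl

/-! ### descent -/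

lemma descend {n k : ℕ} (hk : 2 ≤ k) (m : ℕ) :
    ∀ (u : PellVert n k) (w : Fin n → Fin (k + 1))
      (hw : isPellStr k (List.ofFn fun i => ((w i) : ℕ)) = true),
      pPhi k u.1 = m → (∀ i, (w i : ℕ) < k ∧ (w i : ℕ) ≤ (u.1 i : ℕ)) →
      ∃ p : (kPellGraph n k).Walk ⟨w, hw⟩ u, 2 * p.length + pPhi k w = pPhi k u.1 := by
  induction m using Nat.strong_induction_on with
  | _ m ih =>
    intro u w hw hm hle
    by_cases hex : ∃ i : Fin n, (u.1 i : ℕ) = k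
    · -- lower the first kk pair
      classical
      set S : Finset (Fin n) := Finset.univ.filter (fun i => (u.1 i : ℕ) = k) with hS
      have hSne : S.Nonempty := by
        obtain ⟨i, hi⟩ := hex
        exact ⟨i, by simp [hS, hi]⟩
      set i0 : Fin n := S.min' hSne with hi0def
      have hi0 : (u.1 i0 : ℕ) = k := by
        have := S.min'_mem hSne
        simpa [hS] using this
      have hmin : ∀ j : Fin n, (u.1 j : ℕ) = k → i0 ≤ j := fun j hj =>
        S.min'_le j (by simp [hS, hj])
      set l : List ℕ := List.ofFn (fun i => (u.1 i : ℕ)) with hl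
      have hgetl : ∀ (j : ℕ) (hj : j < n), l[j]? = some (u.1 ⟨j, hj⟩ : ℕ) := by
        intro j hj
        rw [hl, List.getElem?_ofFn, dif_pos hj]
      have hprior : ∀ j, j < (i0 : ℕ) → l[j]? ≠ some k := by
        intro j hj
        have hjn : j < n := lt_trans hj i0.isLt
        rw [hgetl j hjn]
        intro hc
        have hc' : (u.1 ⟨j, hjn⟩ : ℕ) = k := by simpa using hc
        have h5 := hmin _ hc'
        rw [Fin.le_def] at h5
        simp only at h5
        omega
      have hcur : l[(i0 : ℕ)]? = some k := by rw [hgetl _ i0.isLt, hi0]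
      have hnext := pell_first_pair l (i0 : ℕ) u.2 hprior hcur
      have h1n : (i0 : ℕ) + 1 < n := by
        by_contra hc
        rw [hl, List.getElem?_ofFn, dif_neg hc] at hnext
        exact Option.some_ne_none _ hnext.symm
      set j' : Fin n := ⟨(i0 : ℕ) + 1, h1n⟩ with hj'def
      have hj'val : (u.1 j' : ℕ) = k := by
        rw [hgetl _ h1n] at hnext
        simpa using hnext
      set c : Fin (k + 1) := ⟨k - 1, by omega⟩ with hcdef
      set u' : Fin n → Fin (k + 1) := Function.update (Function.update u.1 i0 c) j' c with hu'
      have hne0 : i0 ≠ j' := by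
        intro h
        have : (i0 : ℕ) = (j' : ℕ) := by rw [h]
        simp [hj'def] at this
      have hu'i0 : (u' i0 : ℕ) = k - 1 := by
        rw [hu', Function.update_of_ne hne0, Function.update_self]
      have hu'j' : (u' j' : ℕ) = k - 1 := by
        rw [hu', Function.update_self]
      have hu'other : ∀ i, i ≠ i0 → i ≠ j' → u' i = u.1 i := by
        intro i h1 h2
        rw [hu', Function.update_of_ne h2, Function.update_of_ne h1]
      -- validity of u'
      have hlist : (List.ofFn fun i => ((u' i) : ℕ)) = (l.set (i0 : ℕ) (k - 1)).set ((i0 : ℕ) + 1) (k - 1) := by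
        rw [hu', ofFn_update, ofFn_update, ← hl]
      have hu'valid : isPellStr k (List.ofFn fun i => ((u' i) : ℕ)) = true := by
        rw [hlist]
        exact pell_set_pair (by omega) l (i0 : ℕ) u.2 hprior hcur hnext
      -- adjacency
      have hadj : pellAdj k u' u.1 := by
        right
        exact ⟨i0, j', rfl, hu'i0, hu'j', hi0, hj'val, fun i h1 h2 => hu'other i h1 h2⟩
      have hAdj : (kPellGraph n k).Adj ⟨u', hu'valid⟩ u := by
        rw [kPellGraph, SimpleGraph.fromRel_adj]
        refine ⟨?_, Or.inl hadj⟩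
        intro hc
        have := congrArg (fun z : PellVert n k => (z.1 i0 : ℕ)) hc
        simp only at this
        omega
      have hphi : pPhi k u.1 = pPhi k u' + 2 := pellAdj_phi (by omega) hadj
      have hle' : ∀ i, (w i : ℕ) < k ∧ (w i : ℕ) ≤ (u' i : ℕ) := by
        intro i
        refine ⟨(hle i).1, ?_⟩
        by_cases h1 : i = i0
        · rw [h1, hu'i0]; have := (hle i0).1; omega
        · by_cases h2 : i = j'
          · rw [h2, hu'j']; have := (hle j').1; omega
          · rw [hu'other i h1 h2]; exact (hle i).2
      obtain ⟨p, hp⟩ := ih (pPhi k u') (by omega) ⟨u', hu'valid⟩ w hw rfl hle'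
      have hp2 : 2 * p.length + pPhi k w = pPhi k u' := hp
      refine ⟨p.concat hAdj, ?_⟩
      rw [SimpleGraph.Walk.length_concat]
      omega
    · push_neg at hex
      have hall : ∀ i, (u.1 i : ℕ) < k := by
        intro i
        have h1 := (u.1 i).isLt
        have h2 := hex i
        omega
      by_cases heq : ∀ i : Fin n, u.1 i = w i
      · have hu : u = ⟨w, hw⟩ := Subtype.ext (funext heq)
        subst hu
        exact ⟨SimpleGraph.Walk.nil, by simp⟩
      · push_neg at heq
        obtain ⟨i, hi⟩ := heq
        have hlt : (w i : ℕ) < (u.1 i : ℕ) := by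
          have h1 := (hle i).2
          have h2 : (u.1 i : ℕ) ≠ (w i : ℕ) := fun h => hi (Fin.ext h)
          omega
        set c : Fin (k + 1) := ⟨(u.1 i : ℕ) - 1, by have := (u.1 i).isLt; omega⟩ with hcdef
        set u' : Fin n → Fin (k + 1) := Function.update u.1 i c with hu'
        have hu'i : (u' i : ℕ) = (u.1 i : ℕ) - 1 := by rw [hu', Function.update_self]
        have hu'other : ∀ j, j ≠ i → u' j = u.1 j := fun j hj => by
          rw [hu', Function.update_of_ne hj]
        have hu'valid : isPellStr k (List.ofFn fun j => ((u' j) : ℕ)) = true := by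
          apply pell_of_all_lt
          intro x hx
          rw [List.mem_ofFn] at hx
          obtain ⟨j, hj⟩ := hx
          by_cases h1 : j = i
          · rw [h1, hu'i] at hj
            have := hall i
            omega
          · rw [hu'other j h1] at hj
            rw [← hj]
            exact hall j
        have hadj : pellAdj k u' u.1 := by
          left
          refine ⟨i, by omega, by rw [hu'i]; have := hall i; omega, fun j hj => hu'other j hj⟩
        have hAdj : (kPellGraph n k).Adj ⟨u', hu'valid⟩ u := by
          rw [kPellGraph, SimpleGraph.fromRel_adj]
          refine ⟨?_, Or.inl hadj⟩
          intro hc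
          have := congrArg (fun z : PellVert n k => (z.1 i : ℕ)) hc
          simp only at this
          omega
        have hphi : pPhi k u.1 = pPhi k u' + 2 := pellAdj_phi (by omega) hadj
        have hle' : ∀ j, (w j : ℕ) < k ∧ (w j : ℕ) ≤ (u' j : ℕ) := by
          intro j
          refine ⟨(hle j).1, ?_⟩
          by_cases h1 : j = i
          · subst h1; omega
          · rw [hu'other j h1]; exact (hle j).2
        obtain ⟨p, hp⟩ := ih (pPhi k u') (by omega) ⟨u', hu'valid⟩ w hw rfl hle'
        have hp2 : 2 * p.length + pPhi k w = pPhi k u' := hp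
        refine ⟨p.concat hAdj, ?_⟩
        rw [SimpleGraph.Walk.length_concat]
        omega

/-! ### upper bound -/

lemma pell_dist_le {n k : ℕ} (hk : 2 ≤ k) (u v : PellVert n k) :
    (kPellGraph n k).dist u v ≤ n * k - (n + 1) / 2 := by
  set w : Fin n → Fin (k + 1) := fun i =>
    ⟨min (min (u.1 i : ℕ) (v.1 i : ℕ)) (k - 1), by omega⟩ with hwdef
  have hwv : isPellStr k (List.ofFn fun i => ((w i) : ℕ)) = true := by
    apply pell_of_all_lt
    intro x hx
    rw [List.mem_ofFn] at hx
    obtain ⟨j, hj⟩ := hx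
    rw [← hj]
    show min (min _ _) (k - 1) < k
    omega
  have hcond : ∀ (z : PellVert n k) i, (w i : ℕ) < k ∧ (w i : ℕ) ≤ (z.1 i : ℕ) → True := fun _ _ _ => trivial
  obtain ⟨p, hp⟩ := descend hk (pPhi k u.1) u w hwv rfl (fun i => by
    constructor
    · show min (min _ _) (k - 1) < k; omega
    · show min (min _ _) (k - 1) ≤ _; omega)
  obtain ⟨q, hq⟩ := descend hk (pPhi k v.1) v w hwv rfl (fun i => by
    constructor
    · show min (min _ _) (k - 1) < k; omega
    · show min (min _ _) (k - 1) ≤ _; omega)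
  have hdist : (kPellGraph n k).dist u v ≤ p.length + q.length := by
    have := SimpleGraph.dist_le (p.reverse.append q)
    simpa using this
  -- counting
  have key : pPhi k u.1 + pPhi k v.1 ≤ 2 * pPhi k w + n * (2 * k - 1) := by
    rw [pPhi, pPhi, pPhi, ← Finset.sum_add_distrib, Finset.mul_sum]
    have : (n : ℕ) * (2 * k - 1) = ∑ _i : Fin n, (2 * k - 1) := by
      rw [Finset.sum_const, Finset.card_univ, Fintype.card_fin, smul_eq_mul]
    rw [this, ← Finset.sum_add_distrib]
    apply Finset.sum_le_sum
    intro i _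
    have ha := (u.1 i).isLt
    have hb := (v.1 i).isLt
    have hwi : (w i : ℕ) = min (min (u.1 i : ℕ) (v.1 i : ℕ)) (k - 1) := rfl
    rw [pwt, pwt, pwt, hwi]
    split_ifs <;> omega
  have hnk : n * (2 * k - 1) + n = 2 * (n * k) := by
    have h1 : n * (2 * k - 1) + n * 1 = n * (2 * k - 1 + 1) := (Nat.mul_add n _ 1).symm
    have h2 : 2 * k - 1 + 1 = 2 * k := by omega
    calc n * (2 * k - 1) + n = n * (2 * k - 1 + 1) := by rw [← h1]; ring
    _ = n * (2 * k) := by rw [h2]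
    _ = 2 * (n * k) := by ring
  obtain ⟨M, hM⟩ : ∃ M, M = n * k := ⟨_, rfl⟩
  rw [← hM] at hnk ⊢
  omega

/-! ### lower bound -/

lemma pell_dist_lower {n k : ℕ} (hn : 1 ≤ n) (hk : 2 ≤ k) :
    ∃ a b : PellVert n k, n * k - (n + 1) / 2 ≤ (kPellGraph n k).dist a b := by
  have h0k : (0 : ℕ) < k := by omega
  set a : Fin n → Fin (k + 1) := fun _ => ⟨0, by omega⟩ with hadef
  have hav : isPellStr k (List.ofFn fun i => ((a i) : ℕ)) = true := by
    apply pell_of_all_lt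
    intro x hx
    rw [List.mem_ofFn] at hx
    obtain ⟨j, hj⟩ := hx
    rw [← hj]; exact h0k
  set c : ℕ := 2 * (n / 2) with hcdef
  have hcn : c ≤ n := by omega
  set b : Fin n → Fin (k + 1) := fun i =>
    if (i : ℕ) < c then ⟨k, by omega⟩ else ⟨k - 1, by omega⟩ with hbdef
  have hblist : (List.ofFn fun i => ((b i) : ℕ))
      = List.replicate c k ++ List.replicate (n - c) (k - 1) := by
    apply List.ext_getElem
    · simp; omega
    · intro i h1 h2
      simp only [List.length_ofFn] at h1
      rw [List.getElem_ofFn]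
      rw [List.getElem_append]
      by_cases hic : i < c
      · rw [dif_pos (by simpa using hic)]
        rw [List.getElem_replicate]
        show ((if ((⟨i, h1⟩ : Fin n) : ℕ) < c then _ else _ : Fin (k+1)) : ℕ) = k
        rw [if_pos (by simpa using hic)]
      · rw [dif_neg (by simpa using hic)]
        rw [List.getElem_replicate]
        show ((if ((⟨i, h1⟩ : Fin n) : ℕ) < c then _ else _ : Fin (k+1)) : ℕ) = k - 1
        rw [if_neg (by simpa using hic)]
  have hbv : isPellStr k (List.ofFn fun i => ((b i) : ℕ)) = true := by
    rw [hblist, hcdef]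
    apply pell_rep
    apply pell_of_all_lt
    intro x hx
    rw [List.mem_replicate] at hx
    omega
  refine ⟨⟨a, hav⟩, ⟨b, hbv⟩, ?_⟩
  -- Phi computations
  have hPhia : pPhi k a = 0 := by
    rw [pPhi]
    apply Finset.sum_eq_zero
    intro i _
    show pwt k 0 = 0
    rw [pwt, if_neg (by omega)]
  have hPhib : pPhi k b = c * (2 * k - 1) + (n - c) * (2 * k - 2) := by
    rw [phi_list, hblist]
    rw [List.map_append, List.map_replicate, List.map_replicate, List.sum_append,
      List.sum_replicate, List.sum_replicate, smul_eq_mul, smul_eq_mul]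
    have e1 : pwt k k = 2 * k - 1 := by rw [pwt, if_pos rfl]
    have e2 : pwt k (k - 1) = 2 * k - 2 := by rw [pwt, if_neg (by omega)]; omega
    rw [e1, e2]
  -- reachability
  obtain ⟨p, _⟩ := descend hk (pPhi k b) ⟨b, hbv⟩ a hav rfl (fun i => by
    constructor
    · show (0 : ℕ) < k; omega
    · show (0 : ℕ) ≤ _; omega)
  have hreach : (kPellGraph n k).Reachable ⟨a, hav⟩ ⟨b, hbv⟩ := ⟨p⟩
  obtain ⟨q, hq⟩ := hreach.exists_walk_length_eq_dist
  have hwphi := walk_phi (by omega : 1 ≤ k) q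
  rw [hPhia, hPhib, hq] at hwphi
  -- arithmetic
  have hkey : c * (2 * k - 1) + (n - c) * (2 * k - 2) + 2 * n = 2 * (n * k) + 2 * (n / 2) := by
    obtain ⟨k', rfl⟩ : ∃ k', k = k' + 2 := ⟨k - 2, by omega⟩
    obtain ⟨t, r, hr, hnr⟩ : ∃ t r, r ≤ 1 ∧ n = 2 * t + r := ⟨n / 2, n % 2, by omega, by omega⟩
    have hct : c = 2 * t := by omega
    have hdt : n / 2 = t := by omega
    have hnc : n - c = r := by omega
    rw [hnc, hct, hdt, hnr]
    have e1 : 2 * (k' + 2) - 1 = 2 * k' + 3 := by omega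
    have e2 : 2 * (k' + 2) - 2 = 2 * k' + 2 := by omega
    rw [e1, e2]
    ring
  obtain ⟨M, hM⟩ : ∃ M, M = n * k := ⟨_, rfl⟩
  rw [← hM] at hkey ⊢
  omega

/-! ### main theorem -/

theorem kPellGraph_diam (n k : ℕ) (hn : 1 ≤ n) (hk : 2 ≤ k) :
    pellDiam n k = n * k - (n + 1) / 2 := by
  apply le_antisymm
  · apply Finset.sup_le
    intro v _
    apply Finset.sup_le
    intro u _
    exact pell_dist_le hk v u
  · obtain ⟨a, b, hab⟩ := pell_dist_lower (n := n) (k := k) hn hk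
    calc n * k - (n + 1) / 2 ≤ (kPellGraph n k).dist a b := hab
    _ ≤ pellEcc a := Finset.le_sup (Finset.mem_univ b)
    _ ≤ pellDiam n k := Finset.le_sup (Finset.mem_univ a)
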